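/- Let P be a finite poset with n elements, C = {c₁ < ⋯ < c_ℓ} a chain in P, and a = (a₀, a₁, …, a_ℓ) a vector of nonnegative integers with s = a₀ + ⋯ + a_ℓ. Then the number of multichains α₁ ⊇ ⋯ ⊇ α_s of order ideals of P such that for each i ∈ {0,…,ℓ} exactly a_i of the ideals α_j satisfy α_j ∩ C = C_i equals the number of order-reversing maps σ : P → {0,…,s} with σ(c_j) = a_ℓ + a_{ℓ−1} + ⋯ + a_j for every j ∈ {1,…,ℓ}. -/

import Mathlib

open scoped Classical
open Finset

lemma card_filter_fin_val (n : ℕ) (q : ℕ → Prop) [DecidablePred q] :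
    (Finset.univ.filter fun j : Fin n => q j.val).card
      = ((Finset.range n).filter q).card := by
  apply Finset.card_bij (fun j _ => j.val)
  · intro j hj
    simp only [mem_filter, mem_range, mem_univ, true_and] at hj ⊢
    exact ⟨j.isLt, hj⟩
  · intro j _ j' _ h
    exact Fin.val_injective h
  · intro x hx
    simp only [mem_filter, mem_range] at hx
    exact ⟨⟨x, hx.1⟩, by simp [hx.2], rfl⟩

lemma card_filter_fin_lt (n k : ℕ) (hk : k ≤ n) :
    (Finset.univ.filter fun j : Fin n => j.val < k).card = k := by
  rw [card_filter_fin_val n (fun x => x < k)]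
  have h : (Finset.range n).filter (fun x => x < k) = Finset.range k := by
    ext x; simp only [mem_filter, mem_range]; omega
  rw [h, Finset.card_range]

lemma card_filter_fin_ico (n A b : ℕ) (hb : b ≤ n) :
    (Finset.univ.filter fun j : Fin n => A ≤ j.val ∧ j.val < b).card = b - A := by
  rw [card_filter_fin_val n (fun x => A ≤ x ∧ x < b)]
  have h : (Finset.range n).filter (fun x => A ≤ x ∧ x < b) = Finset.Ico A b := by
    ext x; simp only [mem_filter, mem_range, Finset.mem_Ico]; omega
  rw [h, Nat.card_Ico]

lemma mem_iff_lt_card_of_closed {n : ℕ} (F : Finset (Fin n))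
    (h : ∀ x y : Fin n, x ≤ y → y ∈ F → x ∈ F) (x : Fin n) :
    x ∈ F ↔ x.val < F.card := by
  constructor
  · intro hx
    have hsub : Finset.Iic x ⊆ F := fun y hy => h y x (Finset.mem_Iic.mp hy) hx
    have h2 := Finset.card_le_card hsub
    rw [Fin.card_Iic] at h2
    omega
  · intro hx
    by_contra hxF
    have hsub : F ⊆ Finset.univ.filter fun y : Fin n => y.val < x.val := by
      intro y hy
      simp only [mem_filter, mem_univ, true_and]
      by_contra hlt
      exact hxF (h x y (Fin.le_def.mpr (by omega)) hy)
    have h2 := Finset.card_le_card hsub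
    rw [card_filter_fin_lt n x.val (le_of_lt x.isLt)] at h2
    omega

lemma inter_range_eq_image_iff {γ β : Type*} {c : γ → β} (hc : Function.Injective c)
    (A : Set β) (S : Set γ) :
    A ∩ Set.range c = c '' S ↔ ∀ t, (c t ∈ A ↔ t ∈ S) := by
  constructor
  · intro h t
    constructor
    · intro ht
      have hm : c t ∈ c '' S := h ▸ ⟨ht, ⟨t, rfl⟩⟩
      obtain ⟨t', ht', he⟩ := hm
      rwa [← hc he]
    · intro ht
      have hm : c t ∈ A ∩ Set.range c := by rw [h]; exact ⟨t, ht, rfl⟩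
      exact hm.1
  · intro h
    ext x
    constructor
    · rintro ⟨hxA, t, rfl⟩; exact ⟨t, (h t).1 hxA, rfl⟩
    · rintro ⟨t, ht, rfl⟩; exact ⟨(h t).2 ht, t, rfl⟩

lemma nat_eq_of_lt_iff {ℓ m i : ℕ} (hm : m ≤ ℓ) (hi : i ≤ ℓ)
    (h : ∀ t : Fin ℓ, t.val < m ↔ t.val < i) : m = i := by
  by_contra hne
  rcases Nat.lt_or_ge m i with h1 | h1
  · have hv : m < ℓ := lt_of_lt_of_le h1 hi
    have := (h ⟨m, hv⟩).mpr h1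
    simp at this
  · have h2 : i < m := by omega
    have hv : i < ℓ := lt_of_lt_of_le h2 hm
    have := (h ⟨i, hv⟩).mp h2
    simp at this


/-- Let `C = {c 0 < ⋯ < c (ℓ-1)}` be a chain in a finite poset `P` and
`a = (a₀, …, a_ℓ)` nonnegative integers with sum `s`.  The number of multichains
`α₁ ⊇ ⋯ ⊇ α_s` of order ideals of `P` such that for each `i` exactly `a i` of the
ideals `α_j` satisfy `α_j ∩ C = C_i` equals the number of order-reversing maps
`σ : P → {0,…,s}` with `σ (c j) = a_ℓ + ⋯ + a_{j+1}` for every `j`. -/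
theorem card_multichains_eq_card_restricted_partitions
    (P : Type*) [PartialOrder P] [Fintype P] (ℓ : ℕ) (c : Fin ℓ → P)
    (hc : StrictMono c) (a : Fin (ℓ + 1) → ℕ) :
    {α : Fin (∑ i, a i) → LowerSet P | Antitone α ∧
        ∀ i : Fin (ℓ + 1),
          (Finset.univ.filter fun j : Fin (∑ i, a i) =>
            ((α j : Set P) ∩ Set.range c = c '' {t : Fin ℓ | (t : ℕ) < (i : ℕ)})).card
            = a i}.ncard =
    {σ : P → ℕ | (∀ p q : P, p ≤ q → σ q ≤ σ p) ∧ (∀ p : P, σ p ≤ ∑ i, a i) ∧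
        ∀ j : Fin ℓ,
          σ (c j) = ∑ i ∈ Finset.univ.filter (fun i : Fin (ℓ + 1) => (j : ℕ) < (i : ℕ)),
            a i}.ncard := by
    classical
  set s := ∑ i, a i with hs
  set f : (Fin s → LowerSet P) → (P → ℕ) :=
    fun α p => (Finset.univ.filter fun j : Fin s => p ∈ α j).card with hf
  set U : ℕ → ℕ :=
    fun k => ∑ i ∈ Finset.univ.filter (fun i : Fin (ℓ + 1) => k ≤ i.val), a i with hU
  have hU0 : U 0 = s := by
    rw [hU, hs]
    simp
  have hUmono : ∀ k k', k ≤ k' → U k' ≤ U k := by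
    intro k k' hkk'
    apply Finset.sum_le_sum_of_subset
    intro x hx
    simp only [mem_filter, mem_univ, true_and] at hx ⊢
    omega
  have hUtop : U (ℓ + 1) = 0 := by
    rw [hU]
    convert Finset.sum_empty
    ext x
    simp only [mem_filter, mem_univ, true_and, Finset.notMem_empty, iff_false, not_le]
    omega
  have hUstep : ∀ i : Fin (ℓ + 1), U i.val = a i + U (i.val + 1) := by
    intro i
    have hins : Finset.univ.filter (fun x : Fin (ℓ + 1) => i.val ≤ x.val)
        = insert i (Finset.univ.filter fun x : Fin (ℓ + 1) => i.val + 1 ≤ x.val) := by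
      ext x
      simp only [mem_filter, mem_univ, true_and, mem_insert]
      constructor
      · intro hx
        rcases Nat.eq_or_lt_of_le hx with h | h
        · left; exact Fin.ext h.symm
        · right; omega
      · rintro (rfl | hx)
        · exact le_refl _
        · omega
    rw [hU]
    simp only []
    rw [hins, Finset.sum_insert (by simp)]
  have hUle : ∀ k, U k ≤ s := fun k => hU0 ▸ hUmono 0 k (Nat.zero_le k)
  have hsumU : ∀ j : Fin ℓ,
      (∑ i ∈ Finset.univ.filter (fun i : Fin (ℓ + 1) => (j : ℕ) < (i : ℕ)), a i)
        = U (j.val + 1) := by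
    intro j
    rw [hU]
    apply Finset.sum_congr _ (fun _ _ => rfl)
    ext x
    simp only [mem_filter, mem_univ, true_and]
    omega
  -- membership characterization for antitone families
  have hmem : ∀ α : Fin s → LowerSet P, Antitone α → ∀ p : P, ∀ j : Fin s,
      p ∈ α j ↔ j.val < f α p := by
    intro α hα p j
    have := mem_iff_lt_card_of_closed (Finset.univ.filter fun j : Fin s => p ∈ α j)
      (fun x y hxy hy => by
        simp only [mem_filter, mem_univ, true_and] at hy ⊢
        exact (hα hxy) hy) j
    simpa using this
  -- m counts chain elements inside α j
  set m : (Fin s → LowerSet P) → Fin s → ℕ :=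
    fun α j => (Finset.univ.filter fun t : Fin ℓ => c t ∈ α j).card with hm
  have hmle : ∀ α j, m α j ≤ ℓ := by
    intro α j
    refine le_trans (Finset.card_filter_le _ _) ?_
    simp
  have hmmem : ∀ α : Fin s → LowerSet P, ∀ j, ∀ t : Fin ℓ,
      c t ∈ α j ↔ t.val < m α j := by
    intro α j t
    have := mem_iff_lt_card_of_closed (Finset.univ.filter fun t : Fin ℓ => c t ∈ α j)
      (fun x y hxy hy => by
        simp only [mem_filter, mem_univ, true_and] at hy ⊢
        exact (α j).lower (hc.monotone hxy) hy) t
    simpa using this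
  -- chain condition characterization
  have hchain : ∀ α : Fin s → LowerSet P, ∀ j : Fin s, ∀ i : Fin (ℓ + 1),
      (((α j : Set P) ∩ Set.range c = c '' {t : Fin ℓ | (t : ℕ) < (i : ℕ)}) ↔
        m α j = i.val) := by
    intro α j i
    rw [inter_range_eq_image_iff hc.injective]
    constructor
    · intro h
      refine nat_eq_of_lt_iff (hmle α j) (Nat.lt_succ_iff.mp i.isLt) ?_
      intro t
      rw [← hmmem α j t]
      simpa using h t
    · intro h t
      simp only [Set.mem_setOf_eq, SetLike.mem_coe]
      rw [hmmem α j t, h]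
  -- forward: value of f on chain elements
  have hfib : ∀ α : Fin s → LowerSet P, Antitone α →
      (∀ i : Fin (ℓ + 1),
        (Finset.univ.filter fun j : Fin s => m α j = i.val).card = a i) →
      ∀ t : Fin ℓ, f α (c t)
        = ∑ i ∈ Finset.univ.filter (fun i : Fin (ℓ + 1) => (t : ℕ) < (i : ℕ)), a i := by
    intro α hα hcnt t
    have h1 : (Finset.univ.filter fun j : Fin s => c t ∈ α j)
        = Finset.univ.filter fun j : Fin s => t.val < m α j := by
      apply Finset.filter_congr
      intro j _
      exact hmmem α j t
    show (Finset.univ.filter fun j : Fin s => c t ∈ α j).card = _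
    rw [h1]
    rw [Finset.card_eq_sum_card_fiberwise
      (f := fun j : Fin s => (⟨m α j, Nat.lt_succ_of_le (hmle α j)⟩ : Fin (ℓ + 1)))
      (t := Finset.univ.filter fun i : Fin (ℓ + 1) => (t : ℕ) < (i : ℕ))
      (fun j hj => by
        simp only [Finset.mem_coe, mem_filter, mem_univ, true_and] at hj ⊢
        exact hj)]
    apply Finset.sum_congr rfl
    intro i hi
    simp only [mem_filter, mem_univ, true_and] at hi
    rw [← hcnt i]
    congr 1
    ext j
    simp only [mem_filter, mem_univ, true_and, Fin.ext_iff]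
    constructor
    · rintro ⟨_, h⟩; exact h
    · intro h; exact ⟨by omega, h⟩
  -- injectivity
  have hinj : Set.InjOn f {α : Fin s → LowerSet P | Antitone α ∧
      ∀ i : Fin (ℓ + 1),
        (Finset.univ.filter fun j : Fin s =>
          ((α j : Set P) ∩ Set.range c = c '' {t : Fin ℓ | (t : ℕ) < (i : ℕ)})).card
          = a i} := by
    intro α hα β hβ hfe
    funext j
    apply SetLike.ext
    intro p
    rw [hmem α hα.1 p j, hmem β hβ.1 p j, hfe]
  -- image
  have himg : f '' {α : Fin s → LowerSet P | Antitone α ∧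
      ∀ i : Fin (ℓ + 1),
        (Finset.univ.filter fun j : Fin s =>
          ((α j : Set P) ∩ Set.range c = c '' {t : Fin ℓ | (t : ℕ) < (i : ℕ)})).card
          = a i}
      = {σ : P → ℕ | (∀ p q : P, p ≤ q → σ q ≤ σ p) ∧ (∀ p : P, σ p ≤ s) ∧
        ∀ j : Fin ℓ,
          σ (c j) = ∑ i ∈ Finset.univ.filter (fun i : Fin (ℓ + 1) => (j : ℕ) < (i : ℕ)),
            a i} := by
    ext σ
    constructor
    · rintro ⟨α, ⟨hanti, hcount⟩, rfl⟩
      have hcnt : ∀ i : Fin (ℓ + 1),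
          (Finset.univ.filter fun j : Fin s => m α j = i.val).card = a i := by
        intro i
        rw [← hcount i]
        congr 1
        apply Finset.filter_congr
        intro j _
        exact (hchain α j i).symm
      refine ⟨?_, ?_, ?_⟩
      · intro p q hpq
        apply Finset.card_le_card
        intro j hj
        simp only [mem_filter, mem_univ, true_and] at hj ⊢
        exact (α j).lower hpq hj
      · intro p
        refine le_trans (Finset.card_filter_le _ _) ?_
        simp
      · intro t
        exact hfib α hanti hcnt t
    · rintro ⟨hord, hbd, hch⟩
      set α : Fin s → LowerSet P :=
        fun j => ⟨{p | (j : ℕ) < σ p}, fun x y hyx hx => lt_of_lt_of_le hx (hord y x hyx)⟩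
        with hα
      have hmemα : ∀ j : Fin s, ∀ p : P, p ∈ α j ↔ (j : ℕ) < σ p := fun j p => Iff.rfl
      have hanti : Antitone α := by
        intro j j' hjj'
        intro p hp
        exact lt_of_le_of_lt (Fin.le_def.mp hjj') hp
      have hfσ : f α = σ := by
        funext p
        have he : (Finset.univ.filter fun j : Fin s => p ∈ α j)
            = Finset.univ.filter fun j : Fin s => j.val < σ p := by
          apply Finset.filter_congr
          intro j _
          exact hmemα j p
        rw [hf]
        simp only []
        rw [he, card_filter_fin_lt s (σ p) (hbd p)]
      have hcondU : ∀ j : Fin s, ∀ i : Fin (ℓ + 1),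
          (((α j : Set P) ∩ Set.range c = c '' {t : Fin ℓ | (t : ℕ) < (i : ℕ)}) ↔
            (U (i.val + 1) ≤ j.val ∧ j.val < U i.val)) := by
        intro j i
        rw [inter_range_eq_image_iff hc.injective]
        have hmU : ∀ t : Fin ℓ, (c t ∈ (α j : Set P)) ↔ j.val < U (t.val + 1) := by
          intro t
          show (j : ℕ) < σ (c t) ↔ _
          rw [hch t, hsumU t]
        constructor
        · intro h
          constructor
          · rcases Nat.lt_or_ge i.val ℓ with hi | hi
            · have h2 : ¬ ((j : ℕ) < U (i.val + 1)) := by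
                intro hlt
                have hmem2 : c ⟨i.val, hi⟩ ∈ (α j : Set P) := (hmU ⟨i.val, hi⟩).mpr hlt
                have := (h ⟨i.val, hi⟩).mp hmem2
                simp at this
              omega
            · have hieq : i.val = ℓ := by omega
              rw [hieq, hUtop]
              exact Nat.zero_le _
          · rcases Nat.eq_zero_or_pos i.val with h0 | h0
            · rw [h0, hU0]
              exact j.isLt
            · have hv : i.val - 1 < ℓ := by
                have := Nat.lt_succ_iff.mp i.isLt
                omega
              have hmem2 : c ⟨i.val - 1, hv⟩ ∈ (α j : Set P) := by
                apply (h ⟨i.val - 1, hv⟩).mpr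
                simp only [Set.mem_setOf_eq]
                omega
              have h3 := (hmU ⟨i.val - 1, hv⟩).mp hmem2
              have h4 : i.val - 1 + 1 = i.val := by omega
              rwa [h4] at h3
        · rintro ⟨h1, h2⟩ t
          rw [hmU t]
          simp only [Set.mem_setOf_eq]
          constructor
          · intro hlt
            by_contra hti
            have := hUmono (i.val + 1) (t.val + 1) (by omega)
            omega
          · intro hti
            have := hUmono (t.val + 1) (i.val) (by omega)
            omega
      refine ⟨α, ⟨hanti, ?_⟩, hfσ⟩
      intro i
      have he : (Finset.univ.filter fun j : Fin s =>
          ((α j : Set P) ∩ Set.range c = c '' {t : Fin ℓ | (t : ℕ) < (i : ℕ)}))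
          = Finset.univ.filter fun j : Fin s => U (i.val + 1) ≤ j.val ∧ j.val < U i.val := by
        apply Finset.filter_congr
        intro j _
        exact hcondU j i
      rw [he, card_filter_fin_ico s (U (i.val + 1)) (U i.val) (hUle i.val)]
      have := hUstep i
      omega
  rw [← himg, Set.ncard_image_of_injOn hinj]
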